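/- Let G be a graph with maximum degree Δ(G) < Δ, let B' ⊆ V(G), let d > 0, and define iteratively X₁ = {v ∈ V(G) : |N_{B'}(v)| > d} and X_{i+1} = {v ∈ V(G) : |N_{X_i}(v)| > d} for i ≥ 1. Then for every k ≥ 1 and every vertex v ∉ X_k, the number of vertices of B' reachable from v by walks of length exactly k satisfies |N^k_G(v) ∩ B'| ≤ Σ_{i=1}^{k} Δ^{i−1}·d·Δ^{k−i} = k·d·Δ^{k−1}. -/

import Mathlib

open Finset Filter
open scoped Classical

/-- The `k`-th neighborhood of `v` in `G`: vertices reachable from `v` by walks of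
length exactly `k`. -/
noncomputable def kthNbhd {α : Type*} [Fintype α] [DecidableEq α] (G : SimpleGraph α)
    (v : α) : ℕ → Finset α
  | 0 => {v}
  | k + 1 => Finset.univ.filter fun w => ∃ u ∈ kthNbhd G v k, G.Adj u w

/-- The iterated sets `X_k`: `X_1` is the set of vertices with more than `d` neighbors
in `B'`, and `X_{k+1}` is the set of vertices with more than `d` neighbors in `X_k`. -/
noncomputable def iterX {α : Type*} [Fintype α] (G : SimpleGraph α) (B' : Finset α)
    (d : ℝ) : ℕ → Finset α
  | 0 => B'
  | k + 1 => Finset.univ.filter fun v => d < (((iterX G B' d k).filter fun w => G.Adj v w).card : ℝ)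

lemma kthNbhd_succ_eq {α : Type*} [Fintype α] [DecidableEq α] (G : SimpleGraph α) (v : α) :
    ∀ k, kthNbhd G v (k+1) = (G.neighborFinset v).biUnion (fun w => kthNbhd G w k) := by
  intro k
  induction k with
  | zero =>
    ext w
    simp [kthNbhd]
  | succ k ih =>
    have hstep : kthNbhd G v (k+1+1)
        = Finset.univ.filter (fun w => ∃ u ∈ kthNbhd G v (k+1), G.Adj u w) := by
      rw [kthNbhd]
      convert rfl using 2
    rw [hstep, ih]
    ext w
    simp only [Finset.mem_filter, Finset.mem_univ, true_and, Finset.mem_biUnion, kthNbhd]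
    tauto

lemma card_kthNbhd_le {α : Type*} [Fintype α] [DecidableEq α] (G : SimpleGraph α) (Δ : ℝ)
    (hΔ : ∀ v : α, ((G.neighborFinset v).card : ℝ) < Δ) (hΔ0 : 0 ≤ Δ) :
    ∀ k (v : α), ((kthNbhd G v k).card : ℝ) ≤ Δ ^ k := by
  intro k
  induction k with
  | zero => intro v; simp [kthNbhd]
  | succ k ih =>
    intro v
    rw [kthNbhd_succ_eq]
    calc (((G.neighborFinset v).biUnion fun w => kthNbhd G w k).card : ℝ)
        ≤ ((∑ w ∈ G.neighborFinset v, (kthNbhd G w k).card : ℕ) : ℝ) := by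
          exact_mod_cast Finset.card_biUnion_le
      _ = ∑ w ∈ G.neighborFinset v, ((kthNbhd G w k).card : ℝ) := by push_cast; ring
      _ ≤ ∑ w ∈ G.neighborFinset v, Δ ^ k := Finset.sum_le_sum fun w _ => ih w
      _ = ((G.neighborFinset v).card : ℝ) * Δ ^ k := by
          rw [Finset.sum_const, nsmul_eq_mul]
      _ ≤ Δ * Δ ^ k := by
          apply mul_le_mul_of_nonneg_right (le_of_lt (hΔ v)) (pow_nonneg hΔ0 k)
      _ = Δ ^ (k+1) := by ring

lemma main_bound {α : Type*} [Fintype α] [DecidableEq α] (G : SimpleGraph α) (Δ : ℝ)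
    (hΔ : ∀ v : α, ((G.neighborFinset v).card : ℝ) < Δ) (hΔ0 : 0 ≤ Δ)
    (B' : Finset α) (d : ℝ) (hd : 0 < d) :
    ∀ k, 1 ≤ k → ∀ v : α, v ∉ iterX G B' d k →
      ((kthNbhd G v k ∩ B').card : ℝ) ≤ k * d * Δ ^ (k - 1) := by
  intro k hk
  induction k, hk using Nat.le_induction with
  | base =>
    intro v hv
    simp only [iterX, Finset.mem_filter, Finset.mem_univ, true_and, not_lt] at hv
    have : kthNbhd G v 1 ∩ B' = B'.filter fun w => G.Adj v w := by
      ext w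
      simp [kthNbhd, and_comm]
    rw [this]
    simp only [Nat.cast_one, one_mul, Nat.sub_self, pow_zero, mul_one]
    exact not_lt.mp (fun h => hv (Finset.mem_filter.2 ⟨Finset.mem_univ _, h⟩))
  | succ k hk ih =>
    intro v hv
    simp only [iterX, Finset.mem_filter, Finset.mem_univ, true_and, not_lt] at hv
    have hsub : kthNbhd G v (k+1) ∩ B' ⊆
        (G.neighborFinset v).biUnion fun w => kthNbhd G w k ∩ B' := by
      intro w hw
      rw [Finset.mem_inter, kthNbhd_succ_eq, Finset.mem_biUnion] at hw
      obtain ⟨⟨x, hx, hw1⟩, hw2⟩ := hw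
      exact Finset.mem_biUnion.2 ⟨x, hx, Finset.mem_inter.2 ⟨hw1, hw2⟩⟩
    have h1 : ((kthNbhd G v (k+1) ∩ B').card : ℝ)
        ≤ ∑ w ∈ G.neighborFinset v, ((kthNbhd G w k ∩ B').card : ℝ) := by
      calc ((kthNbhd G v (k+1) ∩ B').card : ℝ)
          ≤ (((G.neighborFinset v).biUnion fun w => kthNbhd G w k ∩ B').card : ℝ) := by
            exact_mod_cast Finset.card_le_card hsub
        _ ≤ ((∑ w ∈ G.neighborFinset v, (kthNbhd G w k ∩ B').card : ℕ) : ℝ) := by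
            exact_mod_cast Finset.card_biUnion_le
        _ = _ := by push_cast; ring
    -- split the sum
    rw [← Finset.sum_filter_add_sum_filter_not (G.neighborFinset v)
      (fun w => w ∈ iterX G B' d k)] at h1
    have hin : ∑ w ∈ (G.neighborFinset v).filter (fun w => w ∈ iterX G B' d k),
        ((kthNbhd G w k ∩ B').card : ℝ) ≤ d * Δ ^ k := by
      have hcard : (((G.neighborFinset v).filter (fun w => w ∈ iterX G B' d k)).card : ℝ) ≤ d := by
        have : (G.neighborFinset v).filter (fun w => w ∈ iterX G B' d k)
            = (iterX G B' d k).filter (fun w => G.Adj v w) := by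
          ext w; simp [and_comm]
        rw [this]; exact hv
      calc ∑ w ∈ (G.neighborFinset v).filter (fun w => w ∈ iterX G B' d k),
            ((kthNbhd G w k ∩ B').card : ℝ)
          ≤ ∑ w ∈ (G.neighborFinset v).filter (fun w => w ∈ iterX G B' d k), Δ ^ k := by
            apply Finset.sum_le_sum
            intro w _
            calc ((kthNbhd G w k ∩ B').card : ℝ) ≤ ((kthNbhd G w k).card : ℝ) := by
                  exact_mod_cast Finset.card_le_card Finset.inter_subset_left
              _ ≤ Δ ^ k := card_kthNbhd_le G Δ hΔ hΔ0 k w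
        _ = (((G.neighborFinset v).filter (fun w => w ∈ iterX G B' d k)).card : ℝ) * Δ ^ k := by
            rw [Finset.sum_const, nsmul_eq_mul]
        _ ≤ d * Δ ^ k := mul_le_mul_of_nonneg_right hcard (pow_nonneg hΔ0 k)
    have hout : ∑ w ∈ (G.neighborFinset v).filter (fun w => ¬ w ∈ iterX G B' d k),
        ((kthNbhd G w k ∩ B').card : ℝ) ≤ Δ * (k * d * Δ ^ (k-1)) := by
      have hnn : (0:ℝ) ≤ k * d * Δ ^ (k-1) := by positivity
      calc ∑ w ∈ (G.neighborFinset v).filter (fun w => ¬ w ∈ iterX G B' d k),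
            ((kthNbhd G w k ∩ B').card : ℝ)
          ≤ ∑ w ∈ (G.neighborFinset v).filter (fun w => ¬ w ∈ iterX G B' d k),
            (k * d * Δ ^ (k-1)) := by
            apply Finset.sum_le_sum
            intro w hw
            exact ih w (Finset.mem_filter.1 hw).2
        _ = (((G.neighborFinset v).filter (fun w => ¬ w ∈ iterX G B' d k)).card : ℝ)
              * (k * d * Δ ^ (k-1)) := by rw [Finset.sum_const, nsmul_eq_mul]
        _ ≤ Δ * (k * d * Δ ^ (k-1)) := by
            apply mul_le_mul_of_nonneg_right _ hnn
            calc (((G.neighborFinset v).filter _).card : ℝ)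
                ≤ ((G.neighborFinset v).card : ℝ) := by
                  exact_mod_cast Finset.card_le_card (Finset.filter_subset _ _)
              _ ≤ Δ := le_of_lt (hΔ v)
    have hpow : Δ * Δ ^ (k - 1) = Δ ^ k := by
      rw [← pow_succ']
      congr 1
      omega
    have : ((kthNbhd G v (k+1) ∩ B').card : ℝ) ≤ d * Δ ^ k + Δ * (k * d * Δ ^ (k-1)) := by
      linarith
    calc ((kthNbhd G v (k+1) ∩ B').card : ℝ)
        ≤ d * Δ ^ k + Δ * (k * d * Δ ^ (k-1)) := this
      _ = d * Δ ^ k + (k:ℝ) * d * (Δ * Δ ^ (k-1)) := by ring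
      _ = ((k:ℝ)+1) * d * Δ ^ k := by rw [hpow]; ring
      _ = ((k+1 : ℕ) : ℝ) * d * Δ ^ (k + 1 - 1) := by push_cast; ring_nf

theorem stmt8 {α : Type*} [Fintype α] [DecidableEq α] (G : SimpleGraph α) (Δ : ℝ)
    (hΔ : ∀ v : α, ((G.neighborSet v).ncard : ℝ) < Δ)
    (B' : Finset α) (d : ℝ) (hd : 0 < d) (k : ℕ) (hk : 1 ≤ k)
    (v : α) (hv : v ∉ iterX G B' d k) :
    ((kthNbhd G v k ∩ B').card : ℝ) ≤ ∑ i ∈ Finset.Icc 1 k, Δ ^ (i - 1) * d * Δ ^ (k - i) ∧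
    ∑ i ∈ Finset.Icc 1 k, Δ ^ (i - 1) * d * Δ ^ (k - i) = k * d * Δ ^ (k - 1) := by
  have hΔ' : ∀ w : α, ((G.neighborFinset w).card : ℝ) < Δ := by
    intro w
    have := hΔ w
    rwa [Set.ncard_eq_toFinset_card'] at this
  have hΔ0 : (0:ℝ) ≤ Δ := le_of_lt (lt_of_le_of_lt (Nat.cast_nonneg _) (hΔ' v))
  have hsum : ∑ i ∈ Finset.Icc 1 k, Δ ^ (i - 1) * d * Δ ^ (k - i) = k * d * Δ ^ (k - 1) := by
    rw [Finset.sum_congr rfl (g := fun _ => d * Δ ^ (k-1)) (fun i hi => ?_),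
      Finset.sum_const, Nat.card_Icc, nsmul_eq_mul]
    · push_cast [Nat.add_sub_cancel]; ring
    · simp only [Finset.mem_Icc] at hi
      have h : (i-1) + (k-i) = k - 1 := by omega
      calc Δ ^ (i-1) * d * Δ ^ (k-i) = d * (Δ ^ (i-1) * Δ ^ (k-i)) := by ring
        _ = d * Δ ^ (k-1) := by rw [← pow_add, h]
  refine ⟨?_, hsum⟩
  rw [hsum]
  exact main_bound G Δ hΔ' hΔ0 B' d hd k hk v hv
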